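/- Let p be an odd prime and L = ⟨−1, 2⟩ the subgroup of (Z/pZ)^× generated by −1 and 2, of index ℓ ≥ 3. The quantity s(ℓ) = Σ_{1 ≤ i ≤ ℓ, gcd(i,ℓ)=1} A_g(i, 2i) is independent of the choice of primitive root g; i.e., for any two primitive roots g and h of Z/pZ, Σ_{1 ≤ i ≤ ℓ, gcd(i,ℓ)=1} |(1 + g^i L) ∩ g^{2i} L| = Σ_{1 ≤ i ≤ ℓ, gcd(i,ℓ)=1} |(1 + h^i L) ∩ h^{2i} L|. -/

import Mathlib

/-- The coset `g^i H` viewed as a subset of `ZMod p`. -/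
def coset (p : ℕ) (g : (ZMod p)ˣ) (H : Subgroup (ZMod p)ˣ) (i : ℤ) : Set (ZMod p) :=
  (fun h : (ZMod p)ˣ => ((g ^ i * h : (ZMod p)ˣ) : ZMod p)) '' (H : Set (ZMod p)ˣ)

/-- The cyclotomic number `A(i,j) = |(1 + g^i H) ∩ g^j H|`. -/
noncomputable def cyc (p : ℕ) (g : (ZMod p)ˣ) (H : Subgroup (ZMod p)ˣ) (i j : ℤ) : ℕ :=
  (((fun x => 1 + x) '' coset p g H i) ∩ coset p g H j).ncard

lemma coset_congr' (p : ℕ) (g : (ZMod p)ˣ) (L : Subgroup (ZMod p)ˣ) {i j : ℤ}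
    (hij : g ^ (i - j) ∈ L) : coset p g L i = coset p g L j := by
  unfold coset
  ext x
  simp only [Set.mem_image, SetLike.mem_coe]
  constructor
  · rintro ⟨y, hy, rfl⟩
    refine ⟨g ^ (i - j) * y, L.mul_mem hij hy, ?_⟩
    norm_cast
    rw [← mul_assoc, ← zpow_add]
    congr 2
    ring
  · rintro ⟨y, hy, rfl⟩
    refine ⟨(g ^ (i - j))⁻¹ * y, L.mul_mem (L.inv_mem hij) hy, ?_⟩
    norm_cast
    rw [← mul_assoc, ← zpow_neg, ← zpow_add]
    congr 2
    ring

lemma coset_pow_eq (p : ℕ) (g h : (ZMod p)ˣ) (L : Subgroup (ZMod p)ˣ) (n i : ℤ)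
    (hn : g ^ n = h) : coset p h L i = coset p g L (n * i) := by
  subst hn
  unfold coset
  rw [← zpow_mul]

theorem stmt_4 (p : ℕ) [Fact p.Prime] (hodd : Odd p)
    (u : (ZMod p)ˣ) (hu : (u : ZMod p) = 2)
    (L : Subgroup (ZMod p)ˣ) (hL : L = Subgroup.closure {-1, u})
    (ℓ : ℕ) (hℓ : L.index = ℓ) (hℓ3 : 3 ≤ ℓ)
    (g h : (ZMod p)ˣ)
    (hg : ∀ x : (ZMod p)ˣ, x ∈ Subgroup.zpowers g)
    (hh : ∀ x : (ZMod p)ˣ, x ∈ Subgroup.zpowers h) :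
    ∑ i ∈ (Finset.Icc 1 ℓ).filter (fun i => Nat.gcd i ℓ = 1),
        cyc p g L (i : ℤ) (2 * (i : ℤ))
      = ∑ i ∈ (Finset.Icc 1 ℓ).filter (fun i => Nat.gcd i ℓ = 1),
        cyc p h L (i : ℤ) (2 * (i : ℤ)) := by
  haveI : NeZero ℓ := ⟨by omega⟩
  obtain ⟨n, hn'⟩ := hg h
  obtain ⟨m, hm'⟩ := hh g
  have hn : g ^ n = h := hn'
  have hm : h ^ m = g := hm'
  -- `g ^ ℓ ∈ L`
  have hgL : ∀ d : ℤ, (ℓ : ℤ) ∣ d → g ^ d ∈ L := by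
    intro d ⟨c, hc⟩
    have h1 : g ^ ℓ ∈ L := hℓ ▸ L.pow_index_mem g
    have : g ^ d = (g ^ (ℓ : ℤ)) ^ c := by rw [← zpow_mul, hc]
    rw [this, zpow_natCast]
    exact L.zpow_mem h1 c
  -- key congruence for cyc
  have cyc_congr : ∀ i j i' j' : ℤ, (ℓ : ℤ) ∣ i - i' → (ℓ : ℤ) ∣ j - j' →
      cyc p g L i j = cyc p g L i' j' := by
    intro i j i' j' h1 h2
    unfold cyc
    rw [coset_congr' p g L (hgL _ h1), coset_congr' p g L (hgL _ h2)]
  -- the reduced function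
  set F : ZMod ℓ → ℕ := fun x => cyc p g L (x.val : ℤ) (2 * (x.val : ℤ)) with hF
  have keyA : ∀ a : ℤ, cyc p g L a (2 * a) = F ((a : ZMod ℓ)) := by
    intro a
    apply cyc_congr
    · rw [← ZMod.intCast_zmod_eq_zero_iff_dvd]
      push_cast
      rw [ZMod.natCast_val, ZMod.cast_id]
      ring
    · rw [← ZMod.intCast_zmod_eq_zero_iff_dvd]
      push_cast
      rw [ZMod.natCast_val, ZMod.cast_id]
      ring
  -- `n` is invertible mod ℓ
  have hnm : (ℓ : ℤ) ∣ n * m - 1 := by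
    have hcard : g ^ (n * m - 1) = 1 := by
      have : (g ^ n) ^ m = g := by rw [hn, hm]
      rw [← zpow_mul] at this
      rw [zpow_sub, this, zpow_one, mul_inv_cancel]
    have horder : orderOf g = Nat.card (ZMod p)ˣ :=
      orderOf_eq_card_of_forall_mem_zpowers hg
    have hdvd1 : (orderOf g : ℤ) ∣ n * m - 1 := orderOf_dvd_iff_zpow_eq_one.mpr hcard
    have hdvd2 : ℓ ∣ orderOf g := by
      rw [horder, ← hℓ]
      exact L.index_dvd_card
    exact dvd_trans (Int.natCast_dvd_natCast.mpr hdvd2) hdvd1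
  set n₀ : ZMod ℓ := ((n : ℤ) : ZMod ℓ) with hn₀
  set m₀ : ZMod ℓ := ((m : ℤ) : ZMod ℓ) with hm₀
  have hinv : n₀ * m₀ = 1 := by
    have := (ZMod.intCast_zmod_eq_zero_iff_dvd (n * m - 1) ℓ).mpr hnm
    push_cast at this
    linear_combination this
  have hinv' : m₀ * n₀ = 1 := by rw [mul_comm]; exact hinv
  -- membership facts
  have hmemS : ∀ a : ℕ, a ∈ (Finset.Icc 1 ℓ).filter (fun i => Nat.gcd i ℓ = 1) →
      IsUnit ((a : ZMod ℓ)) ∧ a < ℓ := by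
    intro a ha
    simp only [Finset.mem_filter, Finset.mem_Icc] at ha
    obtain ⟨⟨h1, h2⟩, h3⟩ := ha
    refine ⟨(ZMod.isUnit_iff_coprime a ℓ).mpr h3, ?_⟩
    rcases lt_or_eq_of_le h2 with h | h
    · exact h
    · exfalso; rw [h, Nat.gcd_self] at h3; omega
  have hmem2 : ∀ x : ZMod ℓ, IsUnit x →
      x.val ∈ (Finset.Icc 1 ℓ).filter (fun i => Nat.gcd i ℓ = 1) := by
    intro x hx
    simp only [Finset.mem_filter, Finset.mem_Icc]
    have hxval : ((x.val : ℕ) : ZMod ℓ) = x := by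
      rw [ZMod.natCast_val, ZMod.cast_id]
    have hco : Nat.gcd x.val ℓ = 1 := by
      have hx2 := hx
      rw [← hxval] at hx2
      exact (ZMod.isUnit_iff_coprime x.val ℓ).mp hx2
    have hx0 : x ≠ 0 := by
      intro h0
      rw [h0] at hco
      simp [ZMod.val_zero] at hco
      omega
    have h1 : 1 ≤ x.val := by
      rcases Nat.eq_zero_or_pos x.val with h | h
      · exfalso; apply hx0; rw [← hxval, h]; simp
      · exact h
    exact ⟨⟨h1, le_of_lt (ZMod.val_lt x)⟩, hco⟩
  -- now compute both sums
  have hLHSsummand : ∀ i : ℕ, cyc p g L (i : ℤ) (2 * (i : ℤ)) = F ((i : ZMod ℓ)) := by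
    intro i
    have := keyA (i : ℤ)
    rw [this]
    push_cast
    rfl
  have hRHSsummand : ∀ i : ℕ, cyc p h L (i : ℤ) (2 * (i : ℤ)) = F (n₀ * (i : ZMod ℓ)) := by
    intro i
    have e1 : coset p h L (i : ℤ) = coset p g L (n * i) := coset_pow_eq p g h L n i hn
    have e2 : coset p h L (2 * (i : ℤ)) = coset p g L (n * (2 * i)) :=
      coset_pow_eq p g h L n (2 * i) hn
    have e3 : coset p g L (n * (2 * (i:ℤ))) = coset p g L (2 * (n * (i:ℤ))) := by
      rw [show n * (2 * (i:ℤ)) = 2 * (n * i) from by ring]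
    have : cyc p h L (i : ℤ) (2 * (i : ℤ)) = cyc p g L (n * i) (2 * (n * i)) := by
      unfold cyc
      rw [e1, e2, e3]
    rw [this, keyA (n * i)]
    congr 1
    push_cast
    rfl
  rw [Finset.sum_congr rfl (fun i _ => hLHSsummand i),
      Finset.sum_congr rfl (fun i _ => hRHSsummand i)]
  -- reindex: i ↦ (m₀ * i).val  sends the g-sum to the h-sum
  refine Finset.sum_nbij' (fun a => (m₀ * (a : ZMod ℓ)).val)
    (fun a => (n₀ * (a : ZMod ℓ)).val) ?_ ?_ ?_ ?_ ?_
  · intro a ha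
    obtain ⟨hua, _⟩ := hmemS a ha
    exact hmem2 _ ((IsUnit.of_mul_eq_one (a := m₀) n₀ (by rw [mul_comm]; exact hinv)).mul hua)
  · intro a ha
    obtain ⟨hua, _⟩ := hmemS a ha
    exact hmem2 _ ((IsUnit.of_mul_eq_one (a := n₀) m₀ hinv).mul hua)
  · intro a ha
    obtain ⟨_, hlt⟩ := hmemS a ha
    show (n₀ * (((m₀ * (a : ZMod ℓ)).val : ℕ) : ZMod ℓ)).val = a
    have e : ((((m₀ * (a : ZMod ℓ)).val : ℕ)) : ZMod ℓ) = m₀ * (a : ZMod ℓ) := by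
      rw [ZMod.natCast_val, ZMod.cast_id]
    rw [e, ← mul_assoc, hinv, one_mul, ZMod.val_cast_of_lt hlt]
  · intro a ha
    obtain ⟨_, hlt⟩ := hmemS a ha
    show (m₀ * (((n₀ * (a : ZMod ℓ)).val : ℕ) : ZMod ℓ)).val = a
    have e : ((((n₀ * (a : ZMod ℓ)).val : ℕ)) : ZMod ℓ) = n₀ * (a : ZMod ℓ) := by
      rw [ZMod.natCast_val, ZMod.cast_id]
    rw [e, ← mul_assoc, hinv', one_mul, ZMod.val_cast_of_lt hlt]
  · intro a ha
    show F ((a : ZMod ℓ)) = F (n₀ * (((m₀ * (a : ZMod ℓ)).val : ℕ) : ZMod ℓ))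
    congr 1
    rw [ZMod.natCast_val, ZMod.cast_id, ← mul_assoc, hinv, one_mul]
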